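/- Let $P$ be a nonzero homogeneous polynomial of degree $k_0$ in $(z,\bar z)$. For every $N \geq k_0$, the space of homogeneous polynomials of degree $N$ decomposes as the direct sum of $P \cdot H_{N-k_0}$ and $\ker(P^\star) \cap H_N$, where $H_d$ denotes the space of homogeneous polynomials of degree $d$ in $(z,\bar z)$. -/

import Mathlib

open MvPolynomial

lemma deg2 (d : Fin 2 →₀ ℕ) : d.degree = d 0 + d 1 := by
  rw [Finsupp.degree_apply, Finset.sum_subset (Finset.subset_univ d.support)]
  · simp [Fin.sum_univ_two]
  · intro x _ hx; simpa using Finsupp.notMem_support_iff.mp hx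

lemma weight2 (d : Fin 2 →₀ ℕ) : (Finsupp.weight 1) d = d 0 + d 1 := by
  rw [show (1 : Fin 2 → ℕ) = fun _ => 1 from rfl, ← Finsupp.degree_eq_weight_one, deg2]

lemma iter_pderiv_add (i : Fin 2) (k : ℕ) (Q R : MvPolynomial (Fin 2) ℂ) :
    (pderiv i)^[k] (Q + R) = (pderiv i)^[k] Q + (pderiv i)^[k] R := by
  induction k generalizing Q R with
  | zero => rfl
  | succ k ih => simp only [Function.iterate_succ_apply, map_add, ih]

lemma iter_pderiv_smul (i : Fin 2) (k : ℕ) (c : ℂ) (Q : MvPolynomial (Fin 2) ℂ) :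
    (pderiv i)^[k] (c • Q) = c • (pderiv i)^[k] Q := by
  induction k generalizing Q with
  | zero => rfl
  | succ k ih => rw [Function.iterate_succ_apply, Derivation.map_smul, ih, ← Function.iterate_succ_apply]

lemma iter_pderiv_monomial (i : Fin 2) (n : ℕ) (b : Fin 2 →₀ ℕ) (c : ℂ) :
    (pderiv i)^[n] (monomial b c)
      = monomial (b - Finsupp.single i n) (c * ((b i).descFactorial n)) := by
  induction n generalizing b c with
  | zero => simp
  | succ n ih =>
    rw [Function.iterate_succ_apply, pderiv_monomial, ih]
    have h1 : b - Finsupp.single i 1 - Finsupp.single i n = b - Finsupp.single i (n + 1) := by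
      rw [← tsub_add_eq_tsub_tsub, ← Finsupp.single_add, add_comm]
    have h2 : ((b - Finsupp.single i 1 : Fin 2 →₀ ℕ)) i = b i - 1 := by
      simp [Finsupp.tsub_apply]
    rw [h1, h2]
    congr 1
    rcases Nat.eq_zero_or_pos (b i) with h | h
    · simp [h]
    · obtain ⟨k, hk⟩ := Nat.exists_eq_add_of_lt h
      rw [hk]
      simp only [Nat.zero_add] at hk ⊢
      rw [Nat.succ_descFactorial_succ, Nat.add_sub_cancel]
      push_cast; ring

noncomputable def fischerOp (P Q : MvPolynomial (Fin 2) ℂ) : MvPolynomial (Fin 2) ℂ :=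
  ∑ d ∈ P.support, (starRingEnd ℂ) (P.coeff d) •
    ((pderiv (0 : Fin 2))^[d 0] ((pderiv (1 : Fin 2))^[d 1] Q))

noncomputable def fischerInner (Q T : MvPolynomial (Fin 2) ℂ) : ℂ :=
  ∑ d ∈ Q.support ∪ T.support,
    Q.coeff d * (starRingEnd ℂ) (T.coeff d) * ((d 0).factorial : ℂ) * ((d 1).factorial : ℂ)

lemma fischerOp_eq_sum (P Q : MvPolynomial (Fin 2) ℂ) (u : Finset (Fin 2 →₀ ℕ))
    (hu : P.support ⊆ u) :
    fischerOp P Q = ∑ d ∈ u, (starRingEnd ℂ) (P.coeff d) •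
      ((pderiv (0 : Fin 2))^[d 0] ((pderiv (1 : Fin 2))^[d 1] Q)) := by
  rw [fischerOp, Finset.sum_subset hu]
  intro d _ hd
  rw [notMem_support_iff.mp hd]
  simp

lemma fischerOp_add_left (P P' Q : MvPolynomial (Fin 2) ℂ) :
    fischerOp (P + P') Q = fischerOp P Q + fischerOp P' Q := by
  have h : (P + P').support ⊆ P.support ∪ P'.support := support_add
  rw [fischerOp_eq_sum _ _ _ h,
    fischerOp_eq_sum P Q (P.support ∪ P'.support) Finset.subset_union_left,
    fischerOp_eq_sum P' Q (P.support ∪ P'.support) Finset.subset_union_right,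
    ← Finset.sum_add_distrib]
  refine Finset.sum_congr rfl fun d _ => ?_
  rw [coeff_add, map_add, add_smul]

lemma fischerOp_monomial (m : Fin 2 →₀ ℕ) (p : ℂ) (Q : MvPolynomial (Fin 2) ℂ) :
    fischerOp (monomial m p) Q = (starRingEnd ℂ) p •
      ((pderiv (0 : Fin 2))^[m 0] ((pderiv (1 : Fin 2))^[m 1] Q)) := by
  rcases eq_or_ne p 0 with h | h
  · simp [h, fischerOp]
  · rw [fischerOp, support_monomial, if_neg h, Finset.sum_singleton, coeff_monomial, if_pos rfl]

lemma fischerOp_add_right (P Q Q' : MvPolynomial (Fin 2) ℂ) :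
    fischerOp P (Q + Q') = fischerOp P Q + fischerOp P Q' := by
  rw [fischerOp, fischerOp, fischerOp, ← Finset.sum_add_distrib]
  refine Finset.sum_congr rfl fun d _ => ?_
  rw [iter_pderiv_add, iter_pderiv_add, smul_add]

lemma fischerOp_smul_right (P : MvPolynomial (Fin 2) ℂ) (c : ℂ) (Q : MvPolynomial (Fin 2) ℂ) :
    fischerOp P (c • Q) = c • fischerOp P Q := by
  rw [fischerOp, fischerOp, Finset.smul_sum]
  refine Finset.sum_congr rfl fun d _ => ?_
  rw [iter_pderiv_smul, iter_pderiv_smul, smul_comm]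

lemma fischerOp_sub_right (P Q Q' : MvPolynomial (Fin 2) ℂ) :
    fischerOp P (Q - Q') = fischerOp P Q - fischerOp P Q' := by
  have h := fischerOp_add_right P (Q - Q') Q'
  rw [sub_add_cancel] at h
  rw [h]; ring

lemma fischerInner_eq_sum (Q T : MvPolynomial (Fin 2) ℂ) (u : Finset (Fin 2 →₀ ℕ))
    (hu : Q.support ∪ T.support ⊆ u) :
    fischerInner Q T = ∑ d ∈ u,
      Q.coeff d * (starRingEnd ℂ) (T.coeff d) * ((d 0).factorial : ℂ) * ((d 1).factorial : ℂ) := by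
  rw [fischerInner, Finset.sum_subset hu]
  intro d _ hd
  rw [Finset.notMem_union] at hd
  rw [notMem_support_iff.mp hd.1]
  ring

lemma fischerInner_add_left (Q Q' T : MvPolynomial (Fin 2) ℂ) :
    fischerInner (Q + Q') T = fischerInner Q T + fischerInner Q' T := by
  set u := (Q + Q').support ∪ Q.support ∪ Q'.support ∪ T.support with hu
  have h1 : (Q + Q').support ∪ T.support ⊆ u := by
    intro x hx; rw [Finset.mem_union] at hx; simp only [hu, Finset.mem_union]; tauto
  have h2 : Q.support ∪ T.support ⊆ u := by
    intro x hx; rw [Finset.mem_union] at hx; simp only [hu, Finset.mem_union]; tauto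
  have h3 : Q'.support ∪ T.support ⊆ u := by
    intro x hx; rw [Finset.mem_union] at hx; simp only [hu, Finset.mem_union]; tauto
  rw [fischerInner_eq_sum _ _ _ h1, fischerInner_eq_sum _ _ _ h2, fischerInner_eq_sum _ _ _ h3,
    ← Finset.sum_add_distrib]
  refine Finset.sum_congr rfl fun d _ => ?_
  rw [coeff_add]; ring

lemma fischerInner_add_right (Q T T' : MvPolynomial (Fin 2) ℂ) :
    fischerInner Q (T + T') = fischerInner Q T + fischerInner Q T' := by
  set u := Q.support ∪ (T + T').support ∪ T.support ∪ T'.support with hu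
  have h1 : Q.support ∪ (T + T').support ⊆ u := by
    intro x hx; rw [Finset.mem_union] at hx; simp only [hu, Finset.mem_union]; tauto
  have h2 : Q.support ∪ T.support ⊆ u := by
    intro x hx; rw [Finset.mem_union] at hx; simp only [hu, Finset.mem_union]; tauto
  have h3 : Q.support ∪ T'.support ⊆ u := by
    intro x hx; rw [Finset.mem_union] at hx; simp only [hu, Finset.mem_union]; tauto
  rw [fischerInner_eq_sum _ _ _ h1, fischerInner_eq_sum _ _ _ h2, fischerInner_eq_sum _ _ _ h3,
    ← Finset.sum_add_distrib]
  refine Finset.sum_congr rfl fun d _ => ?_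
  rw [coeff_add, map_add]; ring

lemma fischerInner_zero_right (Q : MvPolynomial (Fin 2) ℂ) : fischerInner Q 0 = 0 := by
  rw [fischerInner]
  refine Finset.sum_eq_zero fun d _ => ?_
  simp

lemma fischerInner_monomial_left (a : Fin 2 →₀ ℕ) (s : ℂ) (T : MvPolynomial (Fin 2) ℂ) :
    fischerInner (monomial a s) T
      = s * (starRingEnd ℂ) (T.coeff a) * ((a 0).factorial : ℂ) * ((a 1).factorial : ℂ) := by
  have hu : (monomial a s).support ∪ T.support ⊆ insert a ((monomial a s).support ∪ T.support) :=
    Finset.subset_insert _ _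
  rw [fischerInner_eq_sum _ _ _ hu, Finset.sum_eq_single a]
  · rw [coeff_monomial, if_pos rfl]
  · intro d _ hd
    rw [coeff_monomial, if_neg (by exact fun h => hd h.symm)]
    ring
  · intro h; exact absurd (Finset.mem_insert_self a _) h

lemma sub_single2 (b m : Fin 2 →₀ ℕ) :
    b - Finsupp.single 1 (m 1) - Finsupp.single 0 (m 0) = b - m := by
  ext i
  simp only [Finsupp.tsub_apply]
  fin_cases i <;> simp [Finsupp.single_apply]

lemma fischer_adjoint (P S T : MvPolynomial (Fin 2) ℂ) :
    fischerInner (P * S) T = fischerInner S (fischerOp P T) := by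
  induction P using MvPolynomial.induction_on' with
  | add p q hp hq =>
    rw [add_mul, fischerInner_add_left, hp, hq, fischerOp_add_left, fischerInner_add_right]
  | monomial m p =>
    rw [fischerOp_monomial]
    induction S using MvPolynomial.induction_on' with
    | add s s' hs hs' =>
      rw [mul_add, fischerInner_add_left, fischerInner_add_left, hs, hs']
    | monomial a s =>
      induction T using MvPolynomial.induction_on' with
      | add t t' ht ht' =>
        rw [fischerInner_add_right, iter_pderiv_add, iter_pderiv_add, smul_add,
          fischerInner_add_right, ht, ht']
      | monomial b t =>
        rw [monomial_mul, iter_pderiv_monomial, iter_pderiv_monomial,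
          sub_single2, smul_monomial, fischerInner_monomial_left, fischerInner_monomial_left,
          coeff_monomial, coeff_monomial]
        have hb0 : ((b - Finsupp.single 1 (m 1) : Fin 2 →₀ ℕ)) 0 = b 0 := by
          simp [Finsupp.tsub_apply, Finsupp.single_apply]
        rw [hb0]
        by_cases hba : b - m = a
        · rw [if_pos hba]
          by_cases hmb : m ≤ b
          · have hbma : b = m + a := by
              rw [← hba, add_comm]; exact (tsub_add_cancel_of_le hmb).symm
            rw [if_pos hbma, hbma]
            have e0 : ((m + a : Fin 2 →₀ ℕ)) 0 = m 0 + a 0 := rfl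
            have e1 : ((m + a : Fin 2 →₀ ℕ)) 1 = m 1 + a 1 := rfl
            rw [e0, e1]
            have f0 : ((a 0).factorial : ℂ) * ((m 0 + a 0).descFactorial (m 0) : ℂ)
                = ((m 0 + a 0).factorial : ℂ) := by
              rw [← Nat.cast_mul, ← Nat.factorial_mul_descFactorial
                (Nat.le_add_right (m 0) (a 0)), Nat.add_sub_cancel_left]
            have f1 : ((a 1).factorial : ℂ) * ((m 1 + a 1).descFactorial (m 1) : ℂ)
                = ((m 1 + a 1).factorial : ℂ) := by
              rw [← Nat.cast_mul, ← Nat.factorial_mul_descFactorial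
                (Nat.le_add_right (m 1) (a 1)), Nat.add_sub_cancel_left]
            rw [smul_eq_mul]
            simp only [map_mul, Complex.conj_conj, map_natCast]
            rw [← f0, ← f1]
            ring
          · -- some coordinate of b is smaller than m: descFactorial vanishes
            have : ∃ i, b i < m i := by
              by_contra hc
              push_neg at hc
              exact hmb (Finsupp.le_def.mpr hc)
            obtain ⟨i, hi⟩ := this
            have hne : b ≠ m + a := by
              intro h
              have := congrArg (fun f : Fin 2 →₀ ℕ => f i) h
              simp only [Finsupp.add_apply] at this
              omega
            rw [if_neg hne]
            have h2 : (b 0).descFactorial (m 0) = 0 ∨ (b 1).descFactorial (m 1) = 0 := by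
              fin_cases i
              · exact Or.inl (Nat.descFactorial_eq_zero_iff_lt.mpr hi)
              · exact Or.inr (Nat.descFactorial_eq_zero_iff_lt.mpr hi)
            rcases h2 with h2 | h2 <;> rw [h2] <;> simp
        · rw [if_neg hba]
          have hne : b ≠ m + a := by
            intro h
            apply hba
            rw [h, add_comm]
            ext i
            simp [Finsupp.tsub_apply]
          rw [if_neg hne]
          simp

lemma fischerInner_self_eq_zero {Q : MvPolynomial (Fin 2) ℂ} (h : fischerInner Q Q = 0) :
    Q = 0 := by
  by_contra hQ
  have hsupp : Q.support.Nonempty := support_nonempty.mpr hQ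
  have hre : fischerInner Q Q = ((∑ d ∈ Q.support,
      Complex.normSq (Q.coeff d) * ((d 0).factorial : ℝ) * ((d 1).factorial : ℝ) : ℝ) : ℂ) := by
    rw [fischerInner, Finset.union_self, Complex.ofReal_sum]
    refine Finset.sum_congr rfl fun d _ => ?_
    rw [Complex.ofReal_mul, Complex.ofReal_mul, ← Complex.mul_conj]
    push_cast
    ring
  rw [hre] at h
  have h0 : (∑ d ∈ Q.support,
      Complex.normSq (Q.coeff d) * ((d 0).factorial : ℝ) * ((d 1).factorial : ℝ)) = 0 := by
    exact_mod_cast h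
  have hpos : ∀ d ∈ Q.support,
      0 < Complex.normSq (Q.coeff d) * ((d 0).factorial : ℝ) * ((d 1).factorial : ℝ) := by
    intro d hd
    have h1 : 0 < Complex.normSq (Q.coeff d) :=
      Complex.normSq_pos.mpr (mem_support_iff.mp hd)
    positivity
  have := Finset.sum_pos hpos hsupp
  linarith

lemma pderiv_isHomogeneous {Q : MvPolynomial (Fin 2) ℂ} {n : ℕ} (i : Fin 2)
    (h : Q.IsHomogeneous n) : (pderiv i Q).IsHomogeneous (n - 1) := by
  rw [show pderiv i Q = ∑ d ∈ Q.support, pderiv i (monomial d (Q.coeff d)) by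
    rw [← map_sum, support_sum_monomial_coeff]]
  apply IsHomogeneous.sum
  intro d hd
  rw [pderiv_monomial]
  rcases Nat.eq_zero_or_pos (d i) with h0 | h0
  · rw [h0]
    simp only [Nat.cast_zero, mul_zero, monomial_zero]
    exact isHomogeneous_zero _ _ _
  · apply isHomogeneous_monomial
    have hdeg : d 0 + d 1 = n := by
      have := h (mem_support_iff.mp hd); rwa [weight2] at this
    rw [deg2]
    have e0 : ((d - Finsupp.single i 1 : Fin 2 →₀ ℕ)) 0 = d 0 - (if i = 0 then 1 else 0) := by
      simp [Finsupp.tsub_apply, Finsupp.single_apply]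
    have e1 : ((d - Finsupp.single i 1 : Fin 2 →₀ ℕ)) 1 = d 1 - (if i = 1 then 1 else 0) := by
      simp [Finsupp.tsub_apply, Finsupp.single_apply]
    rw [e0, e1]
    have hi : i = 0 ∨ i = 1 := by
      fin_cases i
      · exact Or.inl rfl
      · exact Or.inr rfl
    rcases hi with rfl | rfl <;> simp <;> omega

lemma iter_pderiv_isHomogeneous {Q : MvPolynomial (Fin 2) ℂ} {n : ℕ} (i : Fin 2) (k : ℕ)
    (h : Q.IsHomogeneous n) : ((pderiv i)^[k] Q).IsHomogeneous (n - k) := by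
  induction k generalizing Q n with
  | zero => simpa using h
  | succ k ih =>
    rw [Function.iterate_succ_apply]
    have := ih (pderiv_isHomogeneous i h)
    rwa [show n - 1 - k = n - (k + 1) by omega] at this

lemma fischerOp_isHomogeneous {P Q : MvPolynomial (Fin 2) ℂ} {k0 N : ℕ}
    (hP : P.IsHomogeneous k0) (hQ : Q.IsHomogeneous N) :
    (fischerOp P Q).IsHomogeneous (N - k0) := by
  rw [fischerOp]
  apply IsHomogeneous.sum
  intro d hd
  have hdeg : d 0 + d 1 = k0 := by
    have := hP (mem_support_iff.mp hd); rwa [weight2] at this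
  have h1 : ((pderiv (1 : Fin 2))^[d 1] Q).IsHomogeneous (N - d 1) :=
    iter_pderiv_isHomogeneous _ _ hQ
  have h0 : ((pderiv (0 : Fin 2))^[d 0] ((pderiv (1 : Fin 2))^[d 1] Q)).IsHomogeneous (N - k0) := by
    have := iter_pderiv_isHomogeneous (0 : Fin 2) (d 0) h1
    rwa [show N - d 1 - d 0 = N - k0 by omega] at this
  exact (homogeneousSubmodule (Fin 2) ℂ (N - k0)).smul_mem _ h0

noncomputable def conjSwap (P : MvPolynomial (Fin 2) ℂ) : MvPolynomial (Fin 2) ℂ :=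
  rename (Equiv.swap (0 : Fin 2) 1) (map (starRingEnd ℂ) P)

/-- The homogeneous polynomials of degree `N` decompose as the direct sum of
`P · H_{N-k₀}` and `ker P⋆ ∩ H_N`: every homogeneous `Q` of degree `N` is a sum of
the two pieces, and the two subspaces intersect trivially. -/
theorem fischer_direct_sum (k0 N : ℕ) (hN : k0 ≤ N)
    (P : MvPolynomial (Fin 2) ℂ) (hP : P.IsHomogeneous k0) (hP0 : P ≠ 0) :
    (∀ Q : MvPolynomial (Fin 2) ℂ, Q.IsHomogeneous N →
      ∃ S T : MvPolynomial (Fin 2) ℂ, S.IsHomogeneous (N - k0) ∧ T.IsHomogeneous N ∧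
        fischerOp P T = 0 ∧ Q = P * S + T) ∧
    (∀ Q S : MvPolynomial (Fin 2) ℂ, Q.IsHomogeneous N → S.IsHomogeneous (N - k0) →
      Q = P * S → fischerOp P Q = 0 → Q = 0) := by
  have hmul : ∀ S : MvPolynomial (Fin 2) ℂ, S.IsHomogeneous (N - k0) →
      (P * S).IsHomogeneous N := by
    intro S hS
    have := hP.mul hS
    rwa [Nat.add_sub_cancel' hN] at this
  constructor
  · intro Q hQ
    have hle : homogeneousSubmodule (Fin 2) ℂ (N - k0) ≤ restrictTotalDegree (Fin 2) ℂ (N - k0) := by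
      intro x hx
      rw [mem_restrictTotalDegree]
      exact ((mem_homogeneousSubmodule _ _).mp hx).totalDegree_le
    haveI : FiniteDimensional ℂ (homogeneousSubmodule (Fin 2) ℂ (N - k0)) :=
      Submodule.finiteDimensional_of_le hle
    let L : homogeneousSubmodule (Fin 2) ℂ (N - k0) →ₗ[ℂ] homogeneousSubmodule (Fin 2) ℂ (N - k0) :=
      { toFun := fun S => ⟨fischerOp P (P * S.1), fischerOp_isHomogeneous hP (hmul S.1 S.2)⟩
        map_add' := by
          intro S S'
          apply Subtype.ext
          simp only [Submodule.coe_add]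
          rw [mul_add, fischerOp_add_right]
        map_smul' := by
          intro c S
          apply Subtype.ext
          simp only [SetLike.val_smul, RingHom.id_apply]
          rw [mul_smul_comm, fischerOp_smul_right] }
    have hinj : Function.Injective L := by
      rw [injective_iff_map_eq_zero]
      intro S hLS
      have h0 : fischerOp P (P * S.1) = 0 := congrArg Subtype.val hLS
      have hPS : (P * S.1) = 0 := by
        apply fischerInner_self_eq_zero
        rw [fischer_adjoint, h0, fischerInner_zero_right]
      rcases mul_eq_zero.mp hPS with h | h
      · exact absurd h hP0
      · exact Subtype.ext h
    obtain ⟨S, hS⟩ := (LinearMap.injective_iff_surjective.mp hinj)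
      ⟨fischerOp P Q, fischerOp_isHomogeneous hP hQ⟩
    have hS1 : fischerOp P (P * S.1) = fischerOp P Q := congrArg Subtype.val hS
    refine ⟨S.1, Q - P * S.1, S.2, hQ.sub (hmul S.1 S.2), ?_, by ring⟩
    rw [fischerOp_sub_right, hS1, sub_self]
  · intro Q S hQ hS hQPS hop
    apply fischerInner_self_eq_zero
    calc fischerInner Q Q = fischerInner (P * S) Q := by rw [← hQPS]
    _ = fischerInner S (fischerOp P Q) := fischer_adjoint P S Q
    _ = 0 := by rw [hop, fischerInner_zero_right]
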